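/- In R = k[[x₁,x₂,x₃]], the length of R/(x₁, x₂²-x₁x₃, f₂) equals the length of R/(x₁, x₂², x₃^{2q+1}), which equals 2(2q+1). -/

import Mathlib

noncomputable section
open MvPowerSeries

/-- The length of a module as the Krull dimension of its submodule lattice. -/
def Module.length' (R M : Type*) [CommRing R] [AddCommGroup M] [Module R M] :
    WithBot ℕ∞ :=
  Order.krullDim (Submodule R M)

namespace Aux
open Finsupp

variable {k : Type*} [Field k]

abbrev PS (k : Type*) [Field k] := MvPowerSeries (Fin 3) k

/-- the exponent `x₂^a x₃^b` -/
def ee (a b : ℕ) : Fin 3 →₀ ℕ := single 1 a + single 2 b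

/-- the monomial `x₂^a x₃^b` -/
def μ (k : Type*) [Field k] (a b : ℕ) : PS k := monomial (ee a b) 1

lemma ee_apply0 (a b : ℕ) : ee a b 0 = 0 := by simp [ee]
lemma ee_apply1 (a b : ℕ) : ee a b 1 = a := by simp [ee]
lemma ee_apply2 (a b : ℕ) : ee a b 2 = b := by simp [ee]

/-- the ideal of power series none of whose monomials divides `d` -/
def K (k : Type*) [Field k] (d : Fin 3 →₀ ℕ) : Ideal (PS k) where
  carrier := {f | ∀ e ≤ d, coeff e f = 0}
  zero_mem' := by intro e _; simp
  add_mem' := by intro f g hf hg e he; simp [map_add, hf e he, hg e he]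
  smul_mem' := by
    classical
    intro r f hf e he
    rw [smul_eq_mul, coeff_mul]
    refine Finset.sum_eq_zero fun p hp => ?_
    rw [Finset.HasAntidiagonal.mem_antidiagonal] at hp
    have : p.2 ≤ d := le_trans (le_trans le_add_self (le_of_eq hp)) he
    rw [hf p.2 this, mul_zero]

lemma monomial_mem_K {d e : Fin 3 →₀ ℕ} (h : ¬ e ≤ d) :
    (monomial e 1 : PS k) ∈ K k d := by
  intro e' he'
  rw [coeff_monomial, if_neg]
  rintro rfl; exact h he'

end Aux

namespace Aux
open Finsupp
variable {k : Type*} [Field k]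

/-- chain of ideals -/
def C (k : Type*) [Field k] (n t : ℕ) : Ideal (PS k) :=
  Ideal.span ({X 0, X 1 ^ 2, X 2 ^ n} ∪ (fun s => μ k (s / n) (s % n)) '' Set.Ico t (2 * n))

lemma J_le_C (n t : ℕ) : Ideal.span {X 0, X 1 ^ 2, (X 2 : PS k) ^ n} ≤ C k n t :=
  Ideal.span_mono (Set.subset_union_left)

lemma C_top_eq (n : ℕ) : C k n (2 * n) = Ideal.span {X 0, X 1 ^ 2, (X 2 : PS k) ^ n} := by
  unfold C
  rw [Set.Ico_self, Set.image_empty, Set.union_empty]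

lemma not_le_ee {s t n : ℕ} (hn : 0 < n) (hst : t < s) (hs : s < 2 * n) :
    ¬ ee (s / n) (s % n) ≤ ee (t / n) (t % n) := by
  intro h
  have h1 := h 1
  have h2 := h 2
  rw [ee_apply1, ee_apply1] at h1
  rw [ee_apply2, ee_apply2] at h2
  have : s ≤ t := by
    calc s = n * (s / n) + s % n := (Nat.div_add_mod s n).symm
    _ ≤ n * (t / n) + t % n := add_le_add (Nat.mul_le_mul_left n h1) h2
    _ = t := Nat.div_add_mod t n
  omega

lemma C_succ_le_K {n t : ℕ} (hn : 0 < n) (ht : t < 2 * n) :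
    C k n (t + 1) ≤ K k (ee (t / n) (t % n)) := by
  rw [C, Ideal.span_le]
  rintro f (hf | ⟨s, hs, rfl⟩)
  · rcases hf with rfl | rfl | rfl
    · rw [X_def]
      refine monomial_mem_K fun h => ?_
      have := h 0
      rw [ee_apply0] at this
      simp at this
    · rw [X_pow_eq]
      refine monomial_mem_K fun h => ?_
      have := h 1
      rw [ee_apply1, Finsupp.single_apply] at this
      simp at this
      have h2 : t / n < 2 := Nat.div_lt_of_lt_mul (by omega)
      omega
    · rw [X_pow_eq]
      refine monomial_mem_K fun h => ?_
      have := h 2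
      rw [ee_apply2, Finsupp.single_apply] at this
      simp at this
      have := Nat.mod_lt t hn
      omega
  · exact monomial_mem_K (not_le_ee hn (Nat.lt_of_lt_of_le (Nat.lt_succ_self t) hs.1) hs.2)

end Aux

namespace Aux
open Finsupp
variable {k : Type*} [Field k]

lemma C_mono (n : ℕ) {t t' : ℕ} (h : t ≤ t') : C k n t' ≤ C k n t :=
  Ideal.span_mono (Set.union_subset_union_right _
    (Set.image_mono (Set.Ico_subset_Ico_left h)))

lemma C_strict {n t : ℕ} (hn : 0 < n) (ht : t < 2 * n) :
    C k n (t + 1) < C k n t := by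
  refine lt_of_le_of_ne (C_mono n (Nat.le_succ t)) fun h => ?_
  have hμ : μ k (t / n) (t % n) ∈ C k n t :=
    Ideal.subset_span (Or.inr ⟨t, ⟨le_refl t, ht⟩, rfl⟩)
  rw [← h] at hμ
  have := C_succ_le_K hn ht hμ (ee (t / n) (t % n)) le_rfl
  rw [μ, coeff_monomial_same] at this
  exact one_ne_zero this

end Aux

namespace Aux
open Finsupp
variable {k : Type*} [Field k]

def Jn (k : Type*) [Field k] (n : ℕ) : Ideal (PS k) :=
  Ideal.span {X 0, X 1 ^ 2, (X 2 : PS k) ^ n}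

def lowerChain (k : Type*) [Field k] (n : ℕ) (hn : 0 < n) :
    LTSeries {I : Ideal (PS k) // Jn k n ≤ I} where
  length := 2 * n
  toFun i := ⟨C k n (2 * n - i.1), J_le_C n _⟩
  step i := by
    have hi : i.1 < 2 * n := i.2
    have h1 : 2 * n - i.castSucc.1 = (2 * n - (i.1 + 1)) + 1 := by
      simp only [Fin.coe_castSucc]; omega
    have h2 : 2 * n - i.succ.1 = 2 * n - (i.1 + 1) := by
      simp only [Fin.val_succ]
    change C k n _ < C k n _
    rw [h1, h2]
    exact C_strict hn (by omega)

lemma lower_bound (n : ℕ) (hn : 0 < n) :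
    ((2 * n : ℕ) : WithBot ℕ∞) ≤ Order.krullDim (Submodule (PS k) (PS k ⧸ Jn k n)) := by
  rw [Order.krullDim_eq_of_orderIso (Submodule.comapMkQRelIso (Jn k n))]
  exact Order.LTSeries.length_le_krullDim (lowerChain k n hn)

end Aux

namespace Aux
open Finsupp
variable {k : Type*} [Field k]

lemma coeff_Xpow_mul (i : Fin 3) (a : ℕ) (A : PS k) (e : Fin 3 →₀ ℕ) :
    coeff e ((X i ^ a : PS k) * A) =
      if a ≤ e i then coeff (e - single i a) A else 0 := by
  rw [X_pow_eq, coeff_monomial_mul]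
  simp only [Finsupp.single_le_iff, one_mul]

lemma sub_single_apply_ne (e : Fin 3 →₀ ℕ) {i j : Fin 3} (hij : i ≠ j) (a : ℕ) :
    (e - single i a) j = e j := by
  rw [Finsupp.tsub_apply, Finsupp.single_apply, if_neg hij, Nat.sub_zero]

lemma mem_Jn_of {n : ℕ} (g : PS k)
    (h : ∀ e : Fin 3 →₀ ℕ, e 0 = 0 → e 1 < 2 → e 2 < n → coeff e g = 0) :
    g ∈ Jn k n := by
  set A : PS k := (fun e => coeff (e + single 0 1) g : (Fin 3 →₀ ℕ) → k) with hA
  set B : PS k := (fun e => if e 0 = 0 then coeff (e + single 1 2) g else 0 :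
      (Fin 3 →₀ ℕ) → k) with hB
  set Cg : PS k := (fun e => if e 0 = 0 ∧ e 1 < 2 then coeff (e + single 2 n) g else 0 :
      (Fin 3 →₀ ℕ) → k) with hCg
  have hAval : ∀ x : Fin 3 →₀ ℕ, coeff x A = coeff (x + single 0 1) g := fun x => rfl
  have hBval : ∀ x : Fin 3 →₀ ℕ,
      coeff x B = if x 0 = 0 then coeff (x + single 1 2) g else 0 := fun x => rfl
  have hCval : ∀ x : Fin 3 →₀ ℕ,
      coeff x Cg = if x 0 = 0 ∧ x 1 < 2 then coeff (x + single 2 n) g else 0 := fun x => rfl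
  have key : g = X 0 ^ 1 * A + X 1 ^ 2 * B + X 2 ^ n * Cg := by
    ext e
    rw [map_add, map_add, coeff_Xpow_mul, coeff_Xpow_mul, coeff_Xpow_mul]
    have hsub : ∀ (i : Fin 3) (a : ℕ), a ≤ e i → (e - single i a) + single i a = e :=
      fun i a hia => tsub_add_cancel_of_le (Finsupp.single_le_iff.mpr hia)
    by_cases h0 : 1 ≤ e 0
    · rw [if_pos h0, hAval, hsub 0 1 h0]
      have hBz : (if 2 ≤ e 1 then coeff (e - single 1 2) B else 0) = 0 := by
        split
        · rw [hBval, if_neg (by rw [sub_single_apply_ne e (by decide) 2]; omega)]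
        · rfl
      have hCz : (if n ≤ e 2 then coeff (e - single 2 n) Cg else 0) = 0 := by
        split
        · rw [hCval, if_neg (by rw [sub_single_apply_ne e (by decide) n,
            sub_single_apply_ne e (by decide) n]; omega)]
        · rfl
      rw [hBz, hCz, add_zero, add_zero]
    · rw [if_neg h0, zero_add]
      push_neg at h0
      have he0 : e 0 = 0 := by omega
      by_cases h1 : 2 ≤ e 1
      · rw [if_pos h1, hBval,
          if_pos (by rw [sub_single_apply_ne e (by decide) 2]; exact he0),
          hsub 1 2 h1]
        have hCz : (if n ≤ e 2 then coeff (e - single 2 n) Cg else 0) = 0 := by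
          split
          · rw [hCval, if_neg (by rw [sub_single_apply_ne e (by decide) n,
              sub_single_apply_ne e (by decide) n]; omega)]
          · rfl
        rw [hCz, add_zero]
      · have hBz : (if 2 ≤ e 1 then coeff (e - single 1 2) B else 0) = 0 :=
          if_neg h1
        rw [hBz, zero_add]
        by_cases h2 : n ≤ e 2
        · rw [if_pos h2, hCval,
            if_pos (by rw [sub_single_apply_ne e (by decide) n,
              sub_single_apply_ne e (by decide) n]; omega),
            hsub 2 n h2]
        · rw [if_neg h2, h e he0 (by omega) (by omega)]
  rw [key]
  refine add_mem (add_mem ?_ ?_) ?_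
  · exact Ideal.mul_mem_right _ _ (by rw [pow_one]; exact Ideal.subset_span (by simp [Jn]))
  · exact Ideal.mul_mem_right _ _ (Ideal.subset_span (by simp [Jn]))
  · exact Ideal.mul_mem_right _ _ (Ideal.subset_span (by simp [Jn]))

end Aux

namespace Aux
open Finsupp
variable {k : Type*} [Field k]

lemma span_mu_top (n : ℕ) [DecidableEq (PS k ⧸ Jn k n)] :
    Submodule.span k
      (((Finset.univ : Finset (Fin 2 × Fin n)).image
        (fun p => Submodule.Quotient.mk (p := Jn k n) (μ k p.1 p.2)) :
          Finset (PS k ⧸ Jn k n)) : Set (PS k ⧸ Jn k n)) = (⊤ : Submodule k (PS k ⧸ Jn k n)) := by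
  rw [eq_top_iff]
  rintro x -
  obtain ⟨f, rfl⟩ := Submodule.Quotient.mk_surjective _ x
  set c : Fin 2 × Fin n → k := fun p => coeff (ee p.1 p.2) f with hc
  have hg : f - ∑ p : Fin 2 × Fin n, c p • μ k p.1 p.2 ∈ Jn k n := by
    apply mem_Jn_of
    intro e he0 he1 he2
    rw [map_sub, map_sum]
    have hee : e = ee (e 1) (e 2) := by
      ext i
      fin_cases i <;> simp [ee, he0]
    have : ∀ p : Fin 2 × Fin n, coeff e (c p • μ k p.1 p.2) =
        if p = (⟨e 1, he1⟩, ⟨e 2, he2⟩) then coeff e f else 0 := by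
      intro p
      rw [LinearMap.map_smul, μ, coeff_monomial, smul_eq_mul]
      by_cases hp : p = (⟨e 1, he1⟩, ⟨e 2, he2⟩)
      · rw [if_pos hp, hp]
        show c _ * (if e = ee (e 1) (e 2) then 1 else 0) = coeff e f
        rw [if_pos hee, mul_one, hc]
        show coeff (ee (e 1) (e 2)) f = coeff e f
        rw [← hee]
      · rw [if_neg hp, if_neg, mul_zero]
        intro hcon
        apply hp
        have h1' : e 1 = (p.1 : ℕ) := by
          have := congrArg (fun d : Fin 3 →₀ ℕ => d 1) hcon
          simpa [ee_apply1] using this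
        have h2' : e 2 = (p.2 : ℕ) := by
          have := congrArg (fun d : Fin 3 →₀ ℕ => d 2) hcon
          simpa [ee_apply2] using this
        exact Prod.ext (Fin.ext h1'.symm) (Fin.ext h2'.symm)
    rw [Finset.sum_congr rfl fun p _ => this p, Finset.sum_ite_eq' Finset.univ,
      if_pos (Finset.mem_univ _), sub_self]
  have hmk : (Submodule.Quotient.mk (p := Jn k n) f) =
      Submodule.Quotient.mk (∑ p : Fin 2 × Fin n, c p • μ k p.1 p.2) :=
    (Submodule.Quotient.eq _).mpr hg
  rw [hmk]
  rw [show (Submodule.Quotient.mk (p := Jn k n) (∑ p : Fin 2 × Fin n, c p • μ k p.1 p.2)) =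
      ∑ p : Fin 2 × Fin n, c p • Submodule.Quotient.mk (p := Jn k n) (μ k p.1 p.2) by
    rw [← Submodule.mkQ_apply, map_sum]
    exact Finset.sum_congr rfl fun p _ => by
      rw [Submodule.mkQ_apply, Submodule.Quotient.mk_smul]]
  refine Submodule.sum_mem _ fun p _ => Submodule.smul_mem _ _ (Submodule.subset_span ?_)
  exact Finset.mem_coe.mpr (Finset.mem_image.mpr ⟨p, Finset.mem_univ _, rfl⟩)

end Aux

namespace Aux
open Finsupp
variable {k : Type*} [Field k]

lemma finiteDimensional_quot (n : ℕ) : FiniteDimensional k (PS k ⧸ Jn k n) := by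
  classical
  exact ⟨⟨_, span_mu_top (k := k) n⟩⟩

lemma finrank_quot_le (n : ℕ) : Module.finrank k (PS k ⧸ Jn k n) ≤ 2 * n := by
  classical
  have h := span_mu_top (k := k) n
  have := finrank_span_finset_le_card (R := k)
    ((Finset.univ : Finset (Fin 2 × Fin n)).image
      (fun p => Submodule.Quotient.mk (p := Jn k n) (μ k p.1 p.2)))
  rw [Set.finrank, h] at this
  calc Module.finrank k (PS k ⧸ Jn k n)
      = Module.finrank k (⊤ : Submodule k (PS k ⧸ Jn k n)) := (finrank_top k _).symm
    _ ≤ _ := this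
    _ ≤ (Finset.univ : Finset (Fin 2 × Fin n)).card := Finset.card_image_le
    _ = 2 * n := by simp [Finset.card_univ]

lemma upper_bound (n : ℕ) :
    Order.krullDim (Submodule (PS k) (PS k ⧸ Jn k n)) ≤ ((2 * n : ℕ) : WithBot ℕ∞) := by
  haveI := finiteDimensional_quot (k := k) n
  rw [Order.krullDim_eq_iSup_length,
    show ((2 * n : ℕ) : WithBot ℕ∞) = (((2 * n : ℕ) : ℕ∞) : WithBot ℕ∞) from rfl,
    WithBot.coe_le_coe]
  refine iSup_le fun p => ?_
  rw [Nat.cast_le]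
  have key : ∀ i : Fin (p.length + 1),
      (i : ℕ) ≤ Module.finrank k (Submodule.restrictScalars k (p i)) := by
    intro i
    induction i using Fin.induction with
    | zero => exact Nat.zero_le _
    | succ i ih =>
      have hlt : Submodule.restrictScalars k (p i.castSucc) <
          Submodule.restrictScalars k (p i.succ) :=
        (Submodule.restrictScalarsEmbedding k (PS k) _).strictMono (p.step i)
      have := Submodule.finrank_lt_finrank_of_lt hlt
      simp only [Fin.coe_castSucc] at ih
      simp only [Fin.val_succ]
      omega
  have hlast := key (Fin.last _)
  simp only [Fin.val_last] at hlast
  calc p.length ≤ Module.finrank k (Submodule.restrictScalars k (p (Fin.last _))) := hlast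
    _ ≤ Module.finrank k (PS k ⧸ Jn k n) := Submodule.finrank_le _
    _ ≤ 2 * n := finrank_quot_le n

lemma krullDim_quot (n : ℕ) (hn : 0 < n) :
    Order.krullDim (Submodule (PS k) (PS k ⧸ Jn k n)) = ((2 * n : ℕ) : WithBot ℕ∞) :=
  le_antisymm (upper_bound n) (lower_bound n hn)

end Aux

namespace Aux
open Finsupp
variable {k : Type*} [Field k]

lemma X0_pow_mul_mem {I : Ideal (PS k)} (hX : (X 0 : PS k) ∈ I) {a : ℕ} (ha : 1 ≤ a)
    (g : PS k) : (X 0 : PS k) ^ a * g ∈ I := by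
  obtain ⟨b, rfl⟩ : ∃ b, a = b + 1 := ⟨a - 1, by omega⟩
  rw [pow_succ, mul_assoc]
  exact I.mul_mem_left _ (I.mul_mem_right _ hX)

lemma span_eq (q m : ℕ) (hq : 1 ≤ q) (hm : 1 ≤ m) (f₁ f₂ : PS k)
    (hf₁ : f₁ = X 1 ^ 2 - X 0 * X 2)
    (hf₂ : f₂ = -X 0 ^ (2 * (m + q) + 1) - X 0 ^ (m + q - 1) * X 1 ^ 3 * X 2 ^ (q - 1)
        + 3 * X 0 ^ (m + q) * X 1 * X 2 ^ q - X 2 ^ (2 * q + 1)) :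
    Ideal.span {X 0, f₁, f₂} = Jn k (2 * q + 1) := by
  have hX0r : (X 0 : PS k) ∈ Jn k (2 * q + 1) := Ideal.subset_span (by simp [Jn])
  have hX1r : (X 1 : PS k) ^ 2 ∈ Jn k (2 * q + 1) := Ideal.subset_span (by simp [Jn])
  have hX2r : (X 2 : PS k) ^ (2 * q + 1) ∈ Jn k (2 * q + 1) := Ideal.subset_span (by simp [Jn])
  have hX0l : (X 0 : PS k) ∈ Ideal.span {X 0, f₁, f₂} := Ideal.subset_span (by simp)
  have hf₁l : f₁ ∈ Ideal.span {X 0, f₁, f₂} := Ideal.subset_span (by simp)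
  have hf₂l : f₂ ∈ Ideal.span {X 0, f₁, f₂} := Ideal.subset_span (by simp)
  apply le_antisymm
  · rw [Ideal.span_le]
    rintro g (rfl | rfl | rfl)
    · exact hX0r
    · rw [hf₁]
      exact sub_mem hX1r ((Jn k (2 * q + 1)).mul_mem_right _ hX0r)
    · rw [hf₂]
      refine sub_mem (add_mem (sub_mem (neg_mem ?_) ?_) ?_) hX2r
      · have : (X 0 : PS k) ^ (2 * (m + q) + 1) = X 0 ^ (2 * (m + q) + 1) * 1 := by ring
        rw [this]
        exact X0_pow_mul_mem hX0r (by omega) 1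
      · rw [mul_assoc]
        exact X0_pow_mul_mem hX0r (by omega) _
      · have : (3 : PS k) * X 0 ^ (m + q) * X 1 * X 2 ^ q
            = X 0 ^ (m + q) * (3 * X 1 * X 2 ^ q) := by ring
        rw [this]
        exact X0_pow_mul_mem hX0r (by omega) _
  · rw [Jn, Ideal.span_le]
    rintro g (rfl | rfl | rfl)
    · exact hX0l
    · have : (X 1 : PS k) ^ 2 = f₁ + X 0 * X 2 := by rw [hf₁]; ring
      rw [this]
      exact add_mem hf₁l ((Ideal.span {X 0, f₁, f₂}).mul_mem_right _ hX0l)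
    · have : (X 2 : PS k) ^ (2 * q + 1) = -f₂ - X 0 ^ (2 * (m + q) + 1) * 1
          - X 0 ^ (m + q - 1) * (X 1 ^ 3 * X 2 ^ (q - 1))
          + X 0 ^ (m + q) * (3 * X 1 * X 2 ^ q) := by rw [hf₂]; ring
      rw [this]
      refine add_mem (sub_mem (sub_mem (neg_mem hf₂l) ?_) ?_) ?_
      · exact X0_pow_mul_mem hX0l (by omega) _
      · exact X0_pow_mul_mem hX0l (by omega) _
      · exact X0_pow_mul_mem hX0l (by omega) _

end Aux


/-- in `R = k[[x₁,x₂,x₃]]` (with `X 0 = x₁`, `X 1 = x₂`, `X 2 = x₃`),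
`ℓ(R/(x₁, x₂²-x₁x₃, f₂)) = ℓ(R/(x₁, x₂², x₃^{2q+1})) = 2(2q+1)`. -/
theorem stmt_2 {k : Type*} [Field k] (q m : ℕ) (hq : 1 ≤ q) (hm : 1 ≤ m)
    (f₁ f₂ : MvPowerSeries (Fin 3) k)
    (hf₁ : f₁ = X 1 ^ 2 - X 0 * X 2)
    (hf₂ : f₂ = -X 0 ^ (2 * (m + q) + 1) - X 0 ^ (m + q - 1) * X 1 ^ 3 * X 2 ^ (q - 1)
        + 3 * X 0 ^ (m + q) * X 1 * X 2 ^ q - X 2 ^ (2 * q + 1)) :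
    Module.length' (MvPowerSeries (Fin 3) k)
        (MvPowerSeries (Fin 3) k ⧸ Ideal.span {X 0, f₁, f₂}) =
      Module.length' (MvPowerSeries (Fin 3) k)
        (MvPowerSeries (Fin 3) k ⧸
          Ideal.span {X 0, X 1 ^ 2, (X 2 : MvPowerSeries (Fin 3) k) ^ (2 * q + 1)}) ∧
    Module.length' (MvPowerSeries (Fin 3) k)
        (MvPowerSeries (Fin 3) k ⧸ Ideal.span {X 0, f₁, f₂}) =
      ((2 * (2 * q + 1) : ℕ) : WithBot ℕ∞) := by
  have hJ : Ideal.span {X 0, f₁, f₂} = Aux.Jn k (2 * q + 1) :=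
    Aux.span_eq q m hq hm f₁ f₂ hf₁ hf₂
  have hJn : Ideal.span {X 0, X 1 ^ 2, (X 2 : MvPowerSeries (Fin 3) k) ^ (2 * q + 1)}
      = Aux.Jn k (2 * q + 1) := rfl
  have h2 : Module.length' (MvPowerSeries (Fin 3) k)
      (MvPowerSeries (Fin 3) k ⧸ Ideal.span {X 0, f₁, f₂}) =
      ((2 * (2 * q + 1) : ℕ) : WithBot ℕ∞) := by
    rw [show Module.length' (MvPowerSeries (Fin 3) k)
        (MvPowerSeries (Fin 3) k ⧸ Ideal.span {X 0, f₁, f₂}) =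
        Module.length' (MvPowerSeries (Fin 3) k)
        (MvPowerSeries (Fin 3) k ⧸ Aux.Jn k (2 * q + 1)) from
      congrArg (fun I : Ideal (MvPowerSeries (Fin 3) k) =>
        Module.length' (MvPowerSeries (Fin 3) k) (MvPowerSeries (Fin 3) k ⧸ I)) hJ]
    exact Aux.krullDim_quot (2 * q + 1) (by omega)
  refine ⟨?_, h2⟩
  exact congrArg (fun I : Ideal (MvPowerSeries (Fin 3) k) =>
    Module.length' (MvPowerSeries (Fin 3) k) (MvPowerSeries (Fin 3) k ⧸ I)) (hJ.trans hJn.symm)
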